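/- Let K be a field and let n be an index. Suppose given nonzero elements x_{n−1}, x_n, x′_n, x′_{n+1}, y_{n−1}, y_n, y′_n, y′_{n+1} of K and elements z_{n−1}, z_n, z′_n, z′_{n+1} of K satisfying: (i) x_{n−1}·x′_n = x_n·x′_{n+1}; (ii) y′_{n+1}/x′_{n+1} = y′_n/x′_n; (iii) y_n/x_n = y_{n−1}/x_{n−1}; (iv) z′_{n+1}/(x_n·x′_{n+1}) + z_n/x_n − y_n·z′_n/(x_n·x′_n) = z_{n−1}/(x′_n·x_{n−1}) + z′_n/x′_n − y′_n·z_n/(x_n·x′_n). Define, for each index m, the operations F |_m G = x_m⁻¹·(G − y_m·F − z_m) and F |_{m′} G = x′_m⁻¹·(G − y′_m·F − z′_m) on K. Then for all F_a, F_b, F_c, F_d ∈ K: (F_a |_{n′} F_b) |_n (F_c |_{(n+1)′} F_d) = (F_a |_n F_c) |_{n′} (F_b |_{n−1} F_d). (The key transposition-property computation in the verification that the partial algebra of Example 4.5, which yields the link polynomial in infinitely many variables, satisfies axiom C3 in the case |a| = |c| − 1 = |b| + 1 = n, |d| = n.) -/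

import Mathlib

/-- The transposition computation of Example 4.5 (case `|a| = |c|−1 = |b|+1 = n`,
`|d| = n`): under conditions (i)–(iv) on the coefficients, the indexed skein
operations `F |ₘ G = xₘ⁻¹·(G − yₘ·F − zₘ)` and `F |ₘ′ G = x′ₘ⁻¹·(G − y′ₘ·F − z′ₘ)`
satisfy `(F_a |ₙ′ F_b) |ₙ (F_c |₍ₙ₊₁₎′ F_d) = (F_a |ₙ F_c) |ₙ′ (F_b |ₙ₋₁ F_d)`. -/
theorem infiniteVariable_C3_case {K : Type*} [Field K]
    (xnm1 xn x'n x'np1 ynm1 yn y'n y'np1 : K)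
    (hxnm1 : xnm1 ≠ 0) (hxn : xn ≠ 0) (hx'n : x'n ≠ 0) (hx'np1 : x'np1 ≠ 0)
    (hynm1 : ynm1 ≠ 0) (hyn : yn ≠ 0) (hy'n : y'n ≠ 0) (hy'np1 : y'np1 ≠ 0)
    (znm1 zn z'n z'np1 : K)
    (hi : xnm1 * x'n = xn * x'np1)
    (hii : y'np1 / x'np1 = y'n / x'n)
    (hiii : yn / xn = ynm1 / xnm1)
    (hiv : z'np1 / (xn * x'np1) + zn / xn - yn * z'n / (xn * x'n) =
      znm1 / (x'n * xnm1) + z'n / x'n - y'n * zn / (xn * x'n))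
    (barn barnm1 bar'n bar'np1 : K → K → K)
    (hbarn : ∀ F G : K, barn F G = xn⁻¹ * (G - yn * F - zn))
    (hbarnm1 : ∀ F G : K, barnm1 F G = xnm1⁻¹ * (G - ynm1 * F - znm1))
    (hbar'n : ∀ F G : K, bar'n F G = x'n⁻¹ * (G - y'n * F - z'n))
    (hbar'np1 : ∀ F G : K, bar'np1 F G = x'np1⁻¹ * (G - y'np1 * F - z'np1)) :
    ∀ Fa Fb Fc Fd : K,
      barn (bar'n Fa Fb) (bar'np1 Fc Fd) = bar'n (barn Fa Fc) (barnm1 Fb Fd) := by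
  intro Fa Fb Fc Fd
  simp only [hbarn, hbarnm1, hbar'n, hbar'np1]
  have hii' : y'np1 * x'n = y'n * x'np1 := by
    field_simp at hii; linear_combination hii
  have hiii' : yn * xnm1 = ynm1 * xn := by
    field_simp at hiii; linear_combination hiii
  field_simp at hiv
  have h4 : z'np1 * x'n * xnm1 + zn * x'n * x'np1 * xnm1 - yn * z'n * x'np1 * xnm1
      = znm1 * xn * x'np1 + z'n * xn * x'np1 * xnm1 - y'n * zn * x'np1 * xnm1 :=
    mul_left_cancel₀ (mul_ne_zero (pow_ne_zero 3 hxn) (pow_ne_zero 3 hx'n)) (show xn ^ 3 * x'n ^ 3 * _ = xn ^ 3 * x'n ^ 3 * _ by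
      linear_combination xn ^ 3 * x'n ^ 3 * hiv)
  field_simp
  linear_combination Fd * hi - Fc * xnm1 * hii'
    - Fb * x'np1 * hiii' - h4
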